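/- Let s ∈ ℝ^n, s_t ∈ [0,1]^n, ε > 0, and let q^1,...,q^n be i.i.d. standard exponential random variables. Define I := argmin_i {s^i − q^i/ε} and J := argmin_i {s^i + s_t^i − q^i/ε}. Then P[I = j] ≤ e^{ε} P[J = j] for every j. -/

import Mathlib

open MeasureTheory

lemma fpl_core {Ω γ : Type*} [MeasurableSpace Ω] [MeasurableSpace γ] (μ : Measure Ω)
    [IsProbabilityMeasure μ] (X : Ω → ℝ) (hX : Measurable X) (Y : Ω → γ) (hY : Measurable Y)
    (hind : ProbabilityTheory.IndepFun Y X μ) (g : γ → ℝ) (hg : Measurable g) (ε : ℝ)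
    (hpt : ∀ c : ℝ, μ {ω | c ≤ X ω} ≤ ENNReal.ofReal (Real.exp ε) * μ {ω | c + ε ≤ X ω}) :
    μ {ω | g (Y ω) ≤ X ω} ≤ ENNReal.ofReal (Real.exp ε) * μ {ω | g (Y ω) + ε ≤ X ω} := by
  haveI : IsProbabilityMeasure (μ.map X) := Measure.isProbabilityMeasure_map hX.aemeasurable
  rw [ProbabilityTheory.indepFun_iff_map_prod_eq_prod_map_map hY.aemeasurable hX.aemeasurable]
    at hind
  have hmap : ∀ c : ℝ, (μ.map X) (Set.Ici c) = μ {ω | c ≤ X ω} := fun c => by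
    rw [Measure.map_apply hX measurableSet_Ici]; rfl
  have key : ∀ h : γ → ℝ, Measurable h →
      μ {ω | h (Y ω) ≤ X ω} = ∫⁻ y, μ {ω | h y ≤ X ω} ∂(μ.map Y) := by
    intro h hh
    have hA : MeasurableSet {p : γ × ℝ | h p.1 ≤ p.2} :=
      measurableSet_le (hh.comp measurable_fst) measurable_snd
    have h1 : μ {ω | h (Y ω) ≤ X ω} = (μ.map fun ω => (Y ω, X ω)) {p : γ × ℝ | h p.1 ≤ p.2} := by
      rw [Measure.map_apply (hY.prodMk hX) hA]; rfl
    rw [h1, hind, Measure.prod_apply hA]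
    refine lintegral_congr fun y => ?_
    have h2 : (Prod.mk y ⁻¹' {p : γ × ℝ | h p.1 ≤ p.2}) = Set.Ici (h y) := rfl
    rw [h2, hmap]
  have e1 := key g hg
  have e2 := key (fun y => g y + ε) (hg.add_const ε)
  rw [e1, e2, ← lintegral_const_mul' _ _ ENNReal.ofReal_ne_top]
  exact lintegral_mono fun y => hpt (g y)

lemma fpl_tail {Ω : Type*} [MeasurableSpace Ω] (μ : Measure Ω) [IsProbabilityMeasure μ]
    (X : Ω → ℝ) (ε : ℝ) (hε : 0 < ε)
    (htail : ∀ a : ℝ, 0 ≤ a → μ {ω | a ≤ X ω} = ENNReal.ofReal (Real.exp (-a)))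
    (htail' : ∀ a : ℝ, a < 0 → μ {ω | a ≤ X ω} = 1) (c : ℝ) :
    μ {ω | c ≤ X ω} ≤ ENNReal.ofReal (Real.exp ε) * μ {ω | c + ε ≤ X ω} := by
  by_cases hc : 0 ≤ c
  · rw [htail c hc, htail (c + ε) (by linarith), ← ENNReal.ofReal_mul (Real.exp_nonneg _),
      ← Real.exp_add]
    have : ε + -(c + ε) = -c := by ring
    rw [this]
  · push_neg at hc
    rw [htail' c hc]
    by_cases h2 : 0 ≤ c + ε
    · rw [htail _ h2, ← ENNReal.ofReal_mul (Real.exp_nonneg _), ← Real.exp_add]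
      have : ε + -(c + ε) = -c := by ring
      rw [this]
      exact ENNReal.one_le_ofReal.mpr (Real.one_le_exp (by linarith))
    · push_neg at h2
      rw [htail' _ h2, mul_one]
      exact ENNReal.one_le_ofReal.mpr (Real.one_le_exp hε.le)

/-- Key FPL-vs-IFPL lemma: P[I = j] ≤ e^ε · P[J = j], where I minimizes
sⁱ - qⁱ/ε and J minimizes sⁱ + s_tⁱ - qⁱ/ε, for i.i.d. standard exponential q. -/
theorem fpl_ifpl_prob_bound {Ω : Type*} [MeasurableSpace Ω] (μ : Measure Ω)
    [IsProbabilityMeasure μ] (n : ℕ) (hn : 1 ≤ n)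
    (q : Fin n → Ω → ℝ) (hmeas : ∀ i, Measurable (q i))
    (hindep : ProbabilityTheory.iIndepFun q μ)
    (htail : ∀ i, ∀ a : ℝ, 0 ≤ a → μ {ω | a ≤ q i ω} = ENNReal.ofReal (Real.exp (-a)))
    (htail' : ∀ i, ∀ a : ℝ, a < 0 → μ {ω | a ≤ q i ω} = 1)
    (s st : Fin n → ℝ) (hst : ∀ i, st i ∈ Set.Icc (0 : ℝ) 1) (ε : ℝ) (hε : 0 < ε)
    (I J : Ω → Fin n) (hImeas : Measurable I) (hJmeas : Measurable J)
    (hI : ∀ ω i, s (I ω) - q (I ω) ω / ε ≤ s i - q i ω / ε)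
    (hJ : ∀ ω i, s (J ω) + st (J ω) - q (J ω) ω / ε ≤ s i + st i - q i ω / ε)
    (hIuniq : ∀ᵐ ω ∂μ, ∀ i, i ≠ I ω → s (I ω) - q (I ω) ω / ε < s i - q i ω / ε)
    (hJuniq : ∀ᵐ ω ∂μ, ∀ i, i ≠ J ω →
      s (J ω) + st (J ω) - q (J ω) ω / ε < s i + st i - q i ω / ε)
    (j : Fin n) :
    μ {ω | I ω = j} ≤ ENNReal.ofReal (Real.exp ε) * μ {ω | J ω = j} := by
  classical
  by_cases hS : (({j}ᶜ : Finset (Fin n))).Nonempty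
  · haveI : Nonempty {x // x ∈ ({j}ᶜ : Finset (Fin n))} := hS.to_subtype
    set Y : Ω → ({x // x ∈ ({j}ᶜ : Finset (Fin n))} → ℝ) := fun ω i => q i ω with hYdef
    have hYmeas : Measurable Y := measurable_pi_lambda _ fun i => hmeas i
    have hind : ProbabilityTheory.IndepFun Y (q j) μ := by
      have h0 := hindep.indepFun_finset ({j}ᶜ) {j} disjoint_compl_left hmeas
      exact h0.comp measurable_id
        (measurable_pi_apply (⟨j, Finset.mem_singleton_self j⟩ :
          {x // x ∈ ({j} : Finset (Fin n))}))
    have halg : ∀ a b x y : ℝ, a - x / ε ≤ b - y / ε ↔ y + ε * (a - b) ≤ x := by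
      intro a b x y
      rw [← mul_le_mul_iff_right₀ hε, mul_sub, mul_sub, mul_div_cancel₀ _ hε.ne',
        mul_div_cancel₀ _ hε.ne']
      constructor <;> intro h <;> linarith
    set gI : ({x // x ∈ ({j}ᶜ : Finset (Fin n))} → ℝ) → ℝ :=
      fun y => Finset.univ.sup' Finset.univ_nonempty
        (fun i => y i + ε * (s j - s i)) with hgIdef
    set gJ : ({x // x ∈ ({j}ᶜ : Finset (Fin n))} → ℝ) → ℝ :=
      fun y => Finset.univ.sup' Finset.univ_nonempty
        (fun i => y i + ε * (s j + st j - (s i + st i))) with hgJdef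
    have hgImeas : Measurable gI := by
      have h1 : gI = Finset.univ.sup' Finset.univ_nonempty
          (fun i => (fun y : {x // x ∈ ({j}ᶜ : Finset (Fin n))} → ℝ =>
            y i + ε * (s j - s i))) := by
        funext y; rw [Finset.sup'_apply]
      rw [h1]
      exact Finset.measurable_sup' _ fun i _ => (measurable_pi_apply i).add_const _
    have hIset : {ω | I ω = j} =ᵐ[μ] {ω | gI (Y ω) ≤ q j ω} := by
      filter_upwards [hIuniq] with ω hu
      show (I ω = j) = (gI (Y ω) ≤ q j ω)
      rw [eq_iff_iff]
      constructor
      · intro hIj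
        refine Finset.sup'_le _ _ fun i _ => ?_
        have h := hI ω (i : Fin n)
        rw [hIj] at h
        exact (halg (s j) (s (i : Fin n)) (q j ω) (q (i : Fin n) ω)).mp h
      · intro hle
        by_contra hne
        have h1 := hu j fun h => hne h.symm
        have hImem : (I ω) ∈ ({j}ᶜ : Finset (Fin n)) := by simpa using hne
        have h2 : q (I ω) ω + ε * (s j - s (I ω)) ≤ q j ω :=
          le_trans (Finset.le_sup' (fun i : {x // x ∈ ({j}ᶜ : Finset (Fin n))} =>
            Y ω i + ε * (s j - s (i : Fin n))) (Finset.mem_univ ⟨I ω, hImem⟩)) hle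
        have h3 := (halg (s j) (s (I ω)) (q j ω) (q (I ω) ω)).mpr h2
        linarith
    have hJset : {ω | J ω = j} =ᵐ[μ] {ω | gJ (Y ω) ≤ q j ω} := by
      filter_upwards [hJuniq] with ω hu
      show (J ω = j) = (gJ (Y ω) ≤ q j ω)
      rw [eq_iff_iff]
      constructor
      · intro hJj
        refine Finset.sup'_le _ _ fun i _ => ?_
        have h := hJ ω (i : Fin n)
        rw [hJj] at h
        exact (halg (s j + st j) (s (i : Fin n) + st (i : Fin n)) (q j ω)
          (q (i : Fin n) ω)).mp h
      · intro hle
        by_contra hne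
        have h1 := hu j fun h => hne h.symm
        have hJmem : (J ω) ∈ ({j}ᶜ : Finset (Fin n)) := by simpa using hne
        have h2 : q (J ω) ω + ε * (s j + st j - (s (J ω) + st (J ω))) ≤ q j ω :=
          le_trans (Finset.le_sup' (fun i : {x // x ∈ ({j}ᶜ : Finset (Fin n))} =>
            Y ω i + ε * (s j + st j - (s (i : Fin n) + st (i : Fin n))))
            (Finset.mem_univ ⟨J ω, hJmem⟩)) hle
        have h3 := (halg (s j + st j) (s (J ω) + st (J ω)) (q j ω) (q (J ω) ω)).mpr h2
        linarith
    have hgJle : ∀ y, gJ y ≤ gI y + ε := by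
      intro y
      refine Finset.sup'_le _ _ fun i _ => ?_
      have h1 : y i + ε * (s j - s (i : Fin n)) ≤ gI y :=
        Finset.le_sup' (fun i : {x // x ∈ ({j}ᶜ : Finset (Fin n))} =>
          y i + ε * (s j - s (i : Fin n))) (Finset.mem_univ i)
      have h2 : st j - st (i : Fin n) ≤ 1 := by
        have := (hst j).2; have := (hst (i : Fin n)).1; linarith
      have h3 := mul_le_mul_of_nonneg_left h2 hε.le
      have h4 : ε * (s j + st j - (s (i : Fin n) + st (i : Fin n)))
          = ε * (s j - s (i : Fin n)) + ε * (st j - st (i : Fin n)) := by ring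
      linarith
    have hpt : ∀ c : ℝ, μ {ω | c ≤ q j ω} ≤ ENNReal.ofReal (Real.exp ε) *
        μ {ω | c + ε ≤ q j ω} := fpl_tail μ (q j) ε hε (htail j) (htail' j)
    calc μ {ω | I ω = j} = μ {ω | gI (Y ω) ≤ q j ω} := measure_congr hIset
      _ ≤ ENNReal.ofReal (Real.exp ε) * μ {ω | gI (Y ω) + ε ≤ q j ω} :=
          fpl_core μ (q j) (hmeas j) Y hYmeas hind gI hgImeas ε hpt
      _ ≤ ENNReal.ofReal (Real.exp ε) * μ {ω | gJ (Y ω) ≤ q j ω} := by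
          refine mul_le_mul_right (measure_mono fun ω h => ?_) _
          exact le_trans (hgJle (Y ω)) h
      _ = ENNReal.ofReal (Real.exp ε) * μ {ω | J ω = j} := by
          rw [measure_congr hJset]
  · have hall : ∀ i : Fin n, i = j := by
      intro i
      by_contra hij
      exact hS ⟨i, by simpa using hij⟩
    have h1 : {ω | I ω = j} = Set.univ := Set.eq_univ_of_forall fun ω => hall (I ω)
    have h2 : {ω | J ω = j} = Set.univ := Set.eq_univ_of_forall fun ω => hall (J ω)
    rw [h1, h2, measure_univ, mul_one]
    exact ENNReal.one_le_ofReal.mpr (Real.one_le_exp hε.le)
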